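/- The ℓ1 norm R(x) = Σ_{i=1}^N |x^i| on ℝ^N, whose Fenchel conjugate is the indicator function of the cube [−1, 1]^N, is mirror-stratifiable with respect to the stratification 𝒮 = {(−∞,0), {0}, (0,+∞)}^N of ℝ^N (products over coordinates of these three strata of ℝ) and the stratification 𝒮* = {{−1}, (−1,1), {+1}}^N of [−1, 1]^N. -/

import Mathlib

open Filter Topology Set Pointwise

noncomputable section

variable {E : Type*} [NormedAddCommGroup E] [InnerProductSpace ℝ E]

/-- The convex subdifferential of an `EReal`-valued function. -/
def subdiff (R : E → EReal) (x : E) : Set E :=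
  {u | ∀ y, R x + ((inner ℝ u (y - x) : ℝ) : EReal) ≤ R y}

/-- The Legendre–Fenchel conjugate. -/
def fenchel (R : E → EReal) (u : E) : EReal :=
  ⨆ x, ((inner ℝ u x : ℝ) : EReal) - R x

/-- Domain of the subdifferential. -/
def domSubdiff (R : E → EReal) : Set E := {x | (subdiff R x).Nonempty}

/-- A proper extended-real-valued function. -/
def ProperFn (R : E → EReal) : Prop := (∀ x, R x ≠ ⊥) ∧ ∃ x, R x ≠ ⊤

/-- Convexity of an extended-real-valued function, via its epigraph. -/
def ConvexFn (R : E → EReal) : Prop :=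
  Convex ℝ {p : E × ℝ | R p.1 ≤ (p.2 : EReal)}

/-- Proper, convex and lower semicontinuous. -/
def ProperConvexLsc (R : E → EReal) : Prop :=
  ProperFn R ∧ ConvexFn R ∧ LowerSemicontinuous R

/-- The correspondence operator `𝒥_R`. -/
def corrOp (R : E → EReal) (S : Set E) : Set E :=
  ⋃ x ∈ S, intrinsicInterior ℝ (subdiff R x)

/-- The partial order on strata: `M ≤ M' ⟺ M ⊆ cl M'`. -/
def stratLE (M M' : Set E) : Prop := M ⊆ closure M'

/-- A stratification of `D`: a finite partition into nonempty strata
satisfying the frontier condition. -/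
structure IsStratification (D : Set E) (S : Set (Set E)) : Prop where
  finite : S.Finite
  nonempty : ∀ M ∈ S, M.Nonempty
  cover : ⋃₀ S = D
  pairwiseDisjoint : ∀ M ∈ S, ∀ M' ∈ S, M ≠ M' → Disjoint M M'
  frontier_cond : ∀ M ∈ S, ∀ M' ∈ S, (M ∩ closure M').Nonempty → M ⊆ closure M'

/-- `R` is mirror-stratifiable with respect to a primal stratification `S` of
`dom ∂R` and a dual stratification `Sd` of `dom ∂R*`. -/
structure IsMirrorStratifiable (R : E → EReal) (S Sd : Set (Set E)) : Prop where
  primal : IsStratification (domSubdiff R) S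
  dual : IsStratification (domSubdiff (fenchel R)) Sd
  maps_primal : ∀ M ∈ S, corrOp R M ∈ Sd
  maps_dual : ∀ Md ∈ Sd, corrOp (fenchel R) Md ∈ S
  pairing : ∀ M ∈ S, ∀ Md ∈ Sd, (corrOp R M = Md ↔ corrOp (fenchel R) Md = M)
  decreasing : ∀ M ∈ S, ∀ M' ∈ S, (stratLE M M' ↔ stratLE (corrOp R M') (corrOp R M))


/-- Coordinate-wise product stratification of `ℝ^N` built from a collection of pieces of `ℝ`. -/
def coordProdStrat (pieces : Set (Set ℝ)) (N : ℕ) : Set (Set (EuclideanSpace ℝ (Fin N))) :=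
  {M | ∃ s : Fin N → Set ℝ, (∀ i, s i ∈ pieces) ∧ M = {x | ∀ i, x i ∈ s i}}

namespace L1MS


lemma mem_intrinsicInterior_iff' {E : Type*} [NormedAddCommGroup E] [NormedSpace ℝ E] (s : Set E) (x : E) :
    x ∈ intrinsicInterior ℝ s ↔ x ∈ s ∧ ∃ ε > 0, ∀ y ∈ (affineSpan ℝ s : Set E), dist y x < ε → y ∈ s := by
  rw [mem_intrinsicInterior]
  constructor
  · rintro ⟨y, hy, rfl⟩
    rw [mem_interior_iff_mem_nhds, Metric.mem_nhds_iff] at hy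
    obtain ⟨ε, hε, hball⟩ := hy
    refine ⟨hball (Metric.mem_ball_self hε), ε, hε, ?_⟩
    intro z hz hd
    exact hball (show (⟨z, hz⟩ : affineSpan ℝ s) ∈ Metric.ball y ε by
      simp only [Metric.mem_ball, Subtype.dist_eq]; exact hd)
  · rintro ⟨hxs, ε, hε, h⟩
    refine ⟨⟨x, subset_affineSpan ℝ s hxs⟩, ?_, rfl⟩
    rw [mem_interior_iff_mem_nhds, Metric.mem_nhds_iff]
    exact ⟨ε, hε, fun z hz => h z z.2 (by rwa [Metric.mem_ball, Subtype.dist_eq] at hz)⟩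

variable {N : ℕ}

def prodSet (s : Fin N → Set ℝ) : Set (EuclideanSpace ℝ (Fin N)) := {x | ∀ i, x i ∈ s i}

/-- `Function.update` as a map on Euclidean space. -/
def upd (x : EuclideanSpace ℝ (Fin N)) (i : Fin N) (b : ℝ) : EuclideanSpace ℝ (Fin N) :=
  WithLp.toLp 2 (Function.update x i b)

lemma upd_apply (x : EuclideanSpace ℝ (Fin N)) (i : Fin N) (b : ℝ) (j : Fin N) :
    upd x i b j = if j = i then b else x j := by
  classical
  rcases eq_or_ne j i with rfl | hji
  · simp [upd]
  · simp [upd, Function.update_of_ne hji, hji]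

lemma prodSet_eq_pi (s : Fin N → Set ℝ) : prodSet s = WithLp.ofLp ⁻¹' Set.pi Set.univ s := by
  ext x
  constructor
  · intro h i _; exact h i
  · intro h i; exact h i (Set.mem_univ i)

lemma closure_prodSet (s : Fin N → Set ℝ) :
    closure (prodSet s) = prodSet (fun i => closure (s i)) := by
  rw [prodSet_eq_pi, prodSet_eq_pi, ← closure_pi_set]
  exact ((PiLp.homeomorph 2 (fun _ : Fin N => ℝ)).preimage_closure _).symm

lemma prodSet_nonempty {s : Fin N → Set ℝ} (h : ∀ i, (s i).Nonempty) : (prodSet s).Nonempty :=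
  ⟨WithLp.toLp 2 (fun i => (h i).choose), fun i => (h i).choose_spec⟩

lemma prodSet_subset_iff {s t : Fin N → Set ℝ} (h : ∀ i, (s i).Nonempty) :
    prodSet s ⊆ prodSet t ↔ ∀ i, s i ⊆ t i := by
  constructor
  · intro H i a ha
    classical
    have hx : upd (WithLp.toLp 2 (fun j => (h j).choose)) i a ∈ prodSet s := by
      intro j
      rw [upd_apply]
      rcases eq_or_ne j i with rfl | hji
      · simpa using ha
      · simpa [hji] using (h j).choose_spec
    have := H hx i
    rwa [upd_apply, if_pos rfl] at this
  · intro H x hx i; exact H i (hx i)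

lemma prodSet_inj {s t : Fin N → Set ℝ} (hs : ∀ i, (s i).Nonempty) (ht : ∀ i, (t i).Nonempty)
    (heq : prodSet s = prodSet t) : s = t := by
  funext i
  exact le_antisymm ((prodSet_subset_iff hs).1 heq.le i) ((prodSet_subset_iff ht).1 heq.ge i)

lemma dist_coord_le (x y : EuclideanSpace ℝ (Fin N)) (i : Fin N) : dist (x i) (y i) ≤ dist x y := by
  rw [EuclideanSpace.dist_eq]
  have h1 : dist (x i) (y i) = Real.sqrt (dist (x i) (y i) ^ 2) := (Real.sqrt_sq dist_nonneg).symm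
  rw [h1]
  apply Real.sqrt_le_sqrt
  exact Finset.single_le_sum (f := fun j => dist (x j) (y j) ^ 2)
    (fun j _ => sq_nonneg _) (Finset.mem_univ i)

lemma upd_sub_self (x : EuclideanSpace ℝ (Fin N)) (i : Fin N) (b : ℝ) :
    upd x i b - x = EuclideanSpace.single i (b - x i) := by
  classical
  ext j
  have : (upd x i b - x) j = upd x i b j - x j := rfl
  rw [this, upd_apply, EuclideanSpace.single_apply]
  rcases eq_or_ne j i with rfl | hji
  · simp
  · simp [hji]

lemma dist_upd (x : EuclideanSpace ℝ (Fin N)) (i : Fin N) (b : ℝ) :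
    dist (upd x i b) x = |b - x i| := by
  rw [dist_eq_norm, upd_sub_self, EuclideanSpace.norm_single]
  exact Real.norm_eq_abs _

lemma upd_mem {P : Fin N → Set ℝ} {z : EuclideanSpace ℝ (Fin N)} (hz : z ∈ prodSet P)
    {i : Fin N} {b : ℝ} (hb : b ∈ P i) : upd z i b ∈ prodSet P := by
  intro j
  rw [upd_apply]
  rcases eq_or_ne j i with rfl | hji
  · simpa using hb
  · simpa [hji] using hz j

lemma single_zero' (i : Fin N) : (EuclideanSpace.single i (0:ℝ)) = 0 := by
  ext j
  rw [EuclideanSpace.single_apply]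
  simp

lemma upd_sub_upd (z : EuclideanSpace ℝ (Fin N)) (i : Fin N) (a b : ℝ) :
    upd z i a - upd z i b = EuclideanSpace.single i (a - b) := by
  ext j
  have : (upd z i a - upd z i b) j = upd z i a j - upd z i b j := rfl
  rw [this, upd_apply, upd_apply, EuclideanSpace.single_apply]
  rcases eq_or_ne j i with rfl | hji
  · simp
  · simp [hji]

lemma smul_single (r : ℝ) (i : Fin N) (a : ℝ) :
    r • (EuclideanSpace.single i a) = EuclideanSpace.single i (r * a) := by
  ext j
  have : (r • (EuclideanSpace.single i a : EuclideanSpace ℝ (Fin N))) j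
      = r * (EuclideanSpace.single i a : EuclideanSpace ℝ (Fin N)) j := rfl
  rw [this, EuclideanSpace.single_apply, EuclideanSpace.single_apply]
  rcases eq_or_ne j i with rfl | hji
  · simp
  · simp [hji]

lemma eq_sum_single (v : EuclideanSpace ℝ (Fin N)) :
    v = ∑ i, EuclideanSpace.single i (v i) := by
  classical
  ext j
  have h : (∑ i, (EuclideanSpace.single i (v i) : EuclideanSpace ℝ (Fin N))) j
      = ∑ i, (EuclideanSpace.single i (v i) : EuclideanSpace ℝ (Fin N)) j :=
    by rw [WithLp.ofLp_sum]; exact Finset.sum_apply j Finset.univ _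
  rw [h]
  simp only [EuclideanSpace.single_apply]
  rw [Finset.sum_ite_eq Finset.univ j (fun i => v i)]
  simp

/-- The affine subspace of points whose "fixed" coordinates equal `c`. -/
def fixSub (fx : Fin N → Prop) (c : Fin N → ℝ) : AffineSubspace ℝ (EuclideanSpace ℝ (Fin N)) where
  carrier := {x | ∀ i, fx i → x i = c i}
  smul_vsub_vadd_mem' := by
    intro t p1 p2 p3 h1 h2 h3 i hi
    have : (t • (p1 -ᵥ p2) +ᵥ p3) i = t * (p1 i - p2 i) + p3 i := rfl
    rw [this, h1 i hi, h2 i hi, h3 i hi]; ring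

lemma span_prodSet (P : Fin N → Set ℝ) (c : Fin N → ℝ) (fx : Fin N → Prop)
    (hne : ∀ i, (P i).Nonempty)
    (hfix : ∀ i, fx i → P i = {c i})
    (h2 : ∀ i, ¬fx i → ∃ a b : ℝ, a ∈ P i ∧ b ∈ P i ∧ a ≠ b) :
    (affineSpan ℝ (prodSet P) : Set (EuclideanSpace ℝ (Fin N))) = {x | ∀ i, fx i → x i = c i} := by
  apply le_antisymm
  · have : affineSpan ℝ (prodSet P) ≤ fixSub fx c := by
      rw [affineSpan_le]
      intro x hx i hi
      have := hx i
      rw [hfix i hi] at this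
      exact this
    exact this
  · intro a ha
    set z : EuclideanSpace ℝ (Fin N) := WithLp.toLp 2 (fun i => (hne i).choose) with hz_def
    have hz : z ∈ prodSet P := fun i => (hne i).choose_spec
    have hzspan : z ∈ affineSpan ℝ (prodSet P) := subset_affineSpan ℝ _ hz
    have memdir : ∀ (i : Fin N) (t : ℝ), ¬fx i →
        EuclideanSpace.single i t ∈ (affineSpan ℝ (prodSet P)).direction := by
      intro i t hfi
      obtain ⟨a', b', ha', hb', hab⟩ := h2 i hfi
      have hd : EuclideanSpace.single i (a' - b') ∈ (affineSpan ℝ (prodSet P)).direction := by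
        rw [← upd_sub_upd z i a' b']
        exact AffineSubspace.vsub_mem_direction
          (subset_affineSpan ℝ _ (upd_mem hz ha')) (subset_affineSpan ℝ _ (upd_mem hz hb'))
      have : EuclideanSpace.single i t = (t / (a' - b')) • EuclideanSpace.single i (a' - b') := by
        rw [smul_single, div_mul_cancel₀]
        exact sub_ne_zero.2 hab
      rw [this]
      exact Submodule.smul_mem _ _ hd
    have hdir : a - z ∈ (affineSpan ℝ (prodSet P)).direction := by
      have : a - z = ∑ i, EuclideanSpace.single i (a i - z i) := by
        rw [eq_sum_single (a - z)]; rfl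
      rw [this]
      apply Submodule.sum_mem
      intro i _
      by_cases hfi : fx i
      · have hai : a i = c i := ha i hfi
        have hzi : z i = c i := by
          have := hz i; rw [hfix i hfi] at this; exact this
        rw [hai, hzi, sub_self, single_zero']
        exact Submodule.zero_mem _
      · exact memdir i _ hfi
    have : (a - z) +ᵥ z ∈ affineSpan ℝ (prodSet P) :=
      AffineSubspace.vadd_mem_of_mem_direction hdir hzspan
    simpa using this


theorem intrinsicInterior_prodSet (P Q : Fin N → Set ℝ) (c : Fin N → ℝ) (fx : Fin N → Prop)
    (hfix : ∀ i, fx i → P i = {c i} ∧ Q i = {c i})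
    (hfree : ∀ i, ¬fx i → IsOpen (Q i) ∧ (Q i).Nonempty ∧ Q i ⊆ P i ∧
      (∀ a ∈ P i, a ∉ Q i → ∀ δ > 0, ∃ b, |b - a| < δ ∧ b ∉ P i)) :
    intrinsicInterior ℝ (prodSet P) = prodSet Q := by
  classical
  have hne : ∀ i, (P i).Nonempty := by
    intro i
    by_cases hfi : fx i
    · rw [(hfix i hfi).1]; exact ⟨c i, rfl⟩
    · obtain ⟨_, ⟨w, hw⟩, hQP, _⟩ := hfree i hfi
      exact ⟨w, hQP hw⟩
  have h2 : ∀ i, ¬fx i → ∃ a b : ℝ, a ∈ P i ∧ b ∈ P i ∧ a ≠ b := by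
    intro i hfi
    obtain ⟨ho, ⟨w, hw⟩, hQP, _⟩ := hfree i hfi
    obtain ⟨δ, hδ, hball⟩ := Metric.isOpen_iff.1 ho w hw
    have hw2 : w + δ/2 ∈ Q i := hball (by
      rw [Metric.mem_ball, Real.dist_eq]
      rw [show w + δ/2 - w = δ/2 by ring, abs_of_pos (by linarith)]
      linarith)
    exact ⟨w, w + δ/2, hQP hw, hQP hw2, by intro h; nlinarith [h]⟩
  have hspan := span_prodSet P c fx hne (fun i hi => (hfix i hi).1) h2
  ext x
  rw [mem_intrinsicInterior_iff', hspan]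
  constructor
  · rintro ⟨hxP, ε, hε, hb⟩ i
    by_cases hfi : fx i
    · rw [(hfix i hfi).2]
      have := hxP i; rw [(hfix i hfi).1] at this; exact this
    · by_contra hxQ
      obtain ⟨_, _, _, hbd⟩ := hfree i hfi
      obtain ⟨b, hb1, hb2⟩ := hbd (x i) (hxP i) hxQ ε hε
      have hyA : upd x i b ∈ {y : EuclideanSpace ℝ (Fin N) | ∀ j, fx j → y j = c j} := by
        intro j hj
        have hji : j ≠ i := by rintro rfl; exact hfi hj
        rw [upd_apply, if_neg hji]
        have := hxP j; rw [(hfix j hj).1] at this; exact this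
      have hd : dist (upd x i b) x < ε := by rw [dist_upd]; exact hb1
      have hmem := hb _ hyA hd i
      rw [upd_apply, if_pos rfl] at hmem
      exact hb2 hmem
  · intro hxQ
    have hxP : x ∈ prodSet P := by
      intro i
      by_cases hfi : fx i
      · rw [(hfix i hfi).1]
        have := hxQ i; rw [(hfix i hfi).2] at this; exact this
      · exact (hfree i hfi).2.2.1 (hxQ i)
    refine ⟨hxP, ?_⟩
    have hr : ∀ i, ∃ r, 0 < r ∧ (¬fx i → Metric.ball (x i) r ⊆ Q i) := by
      intro i
      by_cases hfi : fx i
      · exact ⟨1, one_pos, fun h => absurd hfi h⟩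
      · obtain ⟨ho, _, _, _⟩ := hfree i hfi
        obtain ⟨r, hr0, hrb⟩ := Metric.isOpen_iff.1 ho (x i) (hxQ i)
        exact ⟨r, hr0, fun _ => hrb⟩
    choose r hr0 hrQ using hr
    obtain ⟨ε, hε0, hεle⟩ : ∃ ε, 0 < ε ∧ ∀ i, ε ≤ r i := by
      rcases isEmpty_or_nonempty (Fin N) with hN | hN
      · exact ⟨1, one_pos, fun i => (hN.false i).elim⟩
      · have hnem : (Finset.univ : Finset (Fin N)).Nonempty := Finset.univ_nonempty
        refine ⟨Finset.univ.inf' hnem r, ?_, fun i => Finset.inf'_le r (Finset.mem_univ i)⟩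
        rw [Finset.lt_inf'_iff]
        exact fun i _ => hr0 i
    refine ⟨ε, hε0, ?_⟩
    intro y hyA hyd i
    by_cases hfi : fx i
    · rw [(hfix i hfi).1]
      exact hyA i hfi
    · have hdc : dist (y i) (x i) < r i :=
        lt_of_le_of_lt (dist_coord_le y x i) (lt_of_lt_of_le hyd (hεle i))
      exact (hfree i hfi).2.2.1 (hrQ i hfi (Metric.mem_ball.2 hdc))

inductive Sg : Type | neg | zer | pos
deriving DecidableEq

instance : Fintype Sg where
  elems := {Sg.neg, Sg.zer, Sg.pos}
  complete := by intro x; cases x <;> simp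

def pset : Sg → Set ℝ
  | .neg => Iio 0
  | .zer => {0}
  | .pos => Ioi 0

def psetC : Sg → Set ℝ
  | .neg => Iic 0
  | .zer => {0}
  | .pos => Ici 0

def dset : Sg → Set ℝ
  | .neg => {-1}
  | .zer => Ioo (-1) 1
  | .pos => {1}

def dsetC : Sg → Set ℝ
  | .neg => {-1}
  | .zer => Icc (-1) 1
  | .pos => {1}

lemma pset_nonempty (a : Sg) : (pset a).Nonempty := by
  cases a
  · exact ⟨-1, by norm_num [pset]⟩
  · exact ⟨0, rfl⟩
  · exact ⟨1, by norm_num [pset]⟩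

lemma dset_nonempty (a : Sg) : (dset a).Nonempty := by
  cases a
  · exact ⟨-1, rfl⟩
  · exact ⟨0, by norm_num [dset]⟩
  · exact ⟨1, rfl⟩

lemma closure_pset (a : Sg) : closure (pset a) = psetC a := by
  cases a
  · exact closure_Iio 0
  · simp [pset, psetC]
  · exact closure_Ioi 0

lemma closure_dset (a : Sg) : closure (dset a) = dsetC a := by
  cases a
  · simp [dset, dsetC]
  · exact closure_Ioo (by norm_num)
  · simp [dset, dsetC]

def sgn (t : ℝ) : Sg := if t < 0 then .neg else if 0 < t then .pos else .zer

def dsgn (t : ℝ) : Sg := if t = -1 then .neg else if t = 1 then .pos else .zer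

lemma sgn_eq_of_mem {t : ℝ} {a : Sg} (h : t ∈ pset a) : sgn t = a := by
  cases a
  · simp only [pset, mem_Iio] at h; simp [sgn, h]
  · simp only [pset, mem_singleton_iff] at h; simp [sgn, h]
  · simp only [pset, mem_Ioi] at h; simp [sgn, h, not_lt.2 h.le]

lemma dsgn_eq_of_mem {t : ℝ} {a : Sg} (h : t ∈ dset a) : dsgn t = a := by
  cases a
  · simp only [dset, mem_singleton_iff] at h; norm_num [dsgn, h]
  · simp only [dset, mem_Ioo] at h
    have h1 : t ≠ -1 := by intro he; rw [he] at h; linarith [h.1]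
    have h2 : t ≠ 1 := by intro he; rw [he] at h; linarith [h.2]
    simp [dsgn, h1, h2]
  · simp only [dset, mem_singleton_iff] at h; norm_num [dsgn, h]

lemma mem_pset_sgn (t : ℝ) : t ∈ pset (sgn t) := by
  unfold sgn
  rcases lt_trichotomy t 0 with h | h | h
  · simp [h, pset]
  · simp [h, pset]
  · simp [h, not_lt.2 h.le, pset]

lemma dset_subset_dsetC (a : Sg) : dset a ⊆ dsetC a := by
  cases a
  · exact subset_rfl
  · exact Ioo_subset_Icc_self
  · exact subset_rfl

lemma pset_subset_psetC (a : Sg) : pset a ⊆ psetC a := by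
  cases a
  · exact Iio_subset_Iic_self
  · exact subset_rfl
  · exact Ioi_subset_Ici_self

/-- Intrinsic interior of a dual-type product stratum. -/
lemma ii_dual (ε : Fin N → Sg) :
    intrinsicInterior ℝ (prodSet (fun i => dsetC (ε i))) = prodSet (fun i => dset (ε i)) := by
  classical
  apply intrinsicInterior_prodSet _ _ (fun i => if ε i = .pos then 1 else -1) (fun i => ε i ≠ .zer)
  · intro i hi
    rcases h : ε i with _ | _ | _
    · simp [h, dsetC, dset]
    · exact absurd h hi
    · simp [h, dsetC, dset]
  · intro i hi
    rw [not_not] at hi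
    rw [hi]
    refine ⟨isOpen_Ioo, ⟨0, by norm_num [dset]⟩, dset_subset_dsetC .zer, ?_⟩
    intro a ha hna δ hδ
    simp only [dsetC, mem_Icc] at ha
    simp only [dset, mem_Ioo, not_and_or, not_lt] at hna
    rcases hna with hna | hna
    · refine ⟨-1 - δ/2, ?_, ?_⟩
      · have : a = -1 := le_antisymm hna ha.1
        rw [this, show -1 - δ/2 - -1 = -(δ/2) by ring, abs_neg, abs_of_pos (by linarith)]
        linarith
      · simp only [dsetC, mem_Icc, not_and_or, not_le]
        left; linarith
    · refine ⟨1 + δ/2, ?_, ?_⟩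
      · have : a = 1 := le_antisymm ha.2 hna
        rw [this, show 1 + δ/2 - 1 = δ/2 by ring, abs_of_pos (by linarith)]
        linarith
      · simp only [dsetC, mem_Icc, not_and_or, not_le]
        right; linarith

/-- Intrinsic interior of a primal-type product stratum. -/
lemma ii_primal (ε : Fin N → Sg) :
    intrinsicInterior ℝ (prodSet (fun i => psetC (ε i))) = prodSet (fun i => pset (ε i)) := by
  classical
  apply intrinsicInterior_prodSet _ _ (fun _ => 0) (fun i => ε i = .zer)
  · intro i hi
    rw [hi]
    exact ⟨rfl, rfl⟩
  · intro i hi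
    rcases h : ε i with _ | _ | _
    · refine ⟨isOpen_Iio, ⟨-1, by norm_num [pset]⟩, pset_subset_psetC .neg, ?_⟩
      intro a ha hna δ hδ
      simp only [psetC, mem_Iic] at ha
      simp only [pset, mem_Iio, not_lt] at hna
      have ha0 : a = 0 := le_antisymm ha hna
      refine ⟨δ/2, ?_, ?_⟩
      · rw [ha0, sub_zero, abs_of_pos (by linarith)]; linarith
      · simp only [psetC, mem_Iic, not_le]; linarith
    · exact absurd h hi
    · refine ⟨isOpen_Ioi, ⟨1, by norm_num [pset]⟩, pset_subset_psetC .pos, ?_⟩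
      intro a ha hna δ hδ
      simp only [psetC, mem_Ici] at ha
      simp only [pset, mem_Ioi, not_lt] at hna
      have ha0 : a = 0 := le_antisymm hna ha
      refine ⟨-(δ/2), ?_, ?_⟩
      · rw [ha0, sub_zero, abs_neg, abs_of_pos (by linarith)]; linarith
      · simp only [psetC, mem_Ici, not_le]; linarith

def Rf : EuclideanSpace ℝ (Fin N) → EReal := fun x => ((∑ i, |x i| : ℝ) : EReal)

def Ff : EuclideanSpace ℝ (Fin N) → EReal := fun u => if ∀ i, |u i| ≤ 1 then (0 : EReal) else ⊤

lemma inner_eq (u v : EuclideanSpace ℝ (Fin N)) : (inner ℝ u v : ℝ) = ∑ i, u i * v i := by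
  simp [PiLp.inner_apply, RCLike.inner_apply, mul_comm]

lemma sum_diff_singleton (f : Fin N → ℝ) (i : Fin N) :
    ∑ j, f j = f i + ∑ j ∈ Finset.univ \ {i}, f j := by
  classical
  rw [← Finset.sum_sdiff (Finset.singleton_subset_iff.2 (Finset.mem_univ i))]
  rw [Finset.sum_singleton]
  ring

lemma mem_subdiff_R_iff (x u : EuclideanSpace ℝ (Fin N)) :
    u ∈ subdiff Rf x ↔ ∀ i, ∀ s : ℝ, |x i| + u i * (s - x i) ≤ |s| := by
  classical
  have key : u ∈ subdiff Rf x ↔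
      ∀ y : EuclideanSpace ℝ (Fin N),
        (∑ i, |x i|) + ∑ i, u i * (y i - x i) ≤ ∑ i, |y i| := by
    unfold subdiff Rf
    simp only [mem_setOf_eq]
    refine forall_congr' (fun y => ?_)
    rw [inner_eq, ← EReal.coe_add, EReal.coe_le_coe_iff]
    exact Iff.rfl
  rw [key]
  constructor
  · intro h i s
    have hy := h (upd x i s)
    have hsum1 : ∑ j, |upd x i s j| = |s| + ∑ j ∈ Finset.univ \ {i}, |x j| := by
      have he : ∀ j, |upd x i s j| = Function.update (fun j => |x j|) i |s| j := by
        intro j; rcases eq_or_ne j i with rfl | hji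
        · rw [upd_apply, if_pos rfl, Function.update_self]
        · rw [upd_apply, if_neg hji, Function.update_of_ne hji]
      rw [Finset.sum_congr rfl (fun j _ => he j), Finset.sum_update_of_mem (Finset.mem_univ i)]
    have hsum2 : ∑ j, u j * (upd x i s j - x j) = u i * (s - x i) := by
      rw [Finset.sum_eq_single i]
      · rw [upd_apply, if_pos rfl]
      · intro j _ hji; rw [upd_apply, if_neg hji]; ring
      · intro hc; exact absurd (Finset.mem_univ i) hc
    rw [hsum2, hsum1, sum_diff_singleton (fun j => |x j|) i] at hy
    linarith
  · intro h y
    have h2 : ∀ i, |x i| + u i * (y i - x i) ≤ |y i| := fun i => h i (y i)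
    calc (∑ i, |x i|) + ∑ i, u i * (y i - x i)
        = ∑ i, (|x i| + u i * (y i - x i)) := (Finset.sum_add_distrib).symm
      _ ≤ ∑ i, |y i| := Finset.sum_le_sum (fun i _ => h2 i)

lemma sd1_iff (t a : ℝ) : (∀ s : ℝ, |t| + a * (s - t) ≤ |s|) ↔ a ∈ dsetC (sgn t) := by
  rcases lt_trichotomy t 0 with ht | ht | ht
  · have hs : sgn t = .neg := by simp [sgn, ht]
    rw [hs]
    simp only [dsetC, mem_singleton_iff]
    constructor
    · intro h
      have h1 := h 0
      have h2 := h (2*t)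
      rw [abs_of_neg ht, abs_of_neg (by linarith : 2*t < 0)] at h2
      rw [abs_of_neg ht] at h1
      simp only [abs_zero] at h1
      have e1 : a ≤ -1 := by nlinarith
      have e2 : -1 ≤ a := by nlinarith
      linarith
    · rintro rfl s
      rw [abs_of_neg ht]
      have := neg_le_abs s
      nlinarith
  · subst ht
    rw [show sgn 0 = .zer from by simp [sgn]]
    simp only [dsetC, mem_Icc]
    constructor
    · intro h
      have h1 := h 1
      have h2 := h (-1)
      norm_num at h1 h2
      exact ⟨by linarith, by linarith⟩
    · rintro ⟨h1, h2⟩ s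
      rw [abs_zero, sub_zero, zero_add]
      calc a * s ≤ |a * s| := le_abs_self _
        _ = |a| * |s| := abs_mul _ _
        _ ≤ 1 * |s| := mul_le_mul_of_nonneg_right (abs_le.2 ⟨h1, h2⟩) (abs_nonneg s)
        _ = |s| := one_mul _
  · have hs : sgn t = .pos := by simp [sgn, ht, not_lt.2 ht.le]
    rw [hs]
    simp only [dsetC, mem_singleton_iff]
    constructor
    · intro h
      have h1 := h 0
      have h2 := h (2*t)
      rw [abs_of_pos ht, abs_of_pos (by linarith : 0 < 2*t)] at h2
      rw [abs_of_pos ht] at h1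
      simp only [abs_zero] at h1
      have e1 : 1 ≤ a := by nlinarith
      have e2 : a ≤ 1 := by nlinarith
      linarith
    · rintro rfl s
      rw [abs_of_pos ht]
      have := le_abs_self s
      nlinarith

lemma subdiff_R_eq (x : EuclideanSpace ℝ (Fin N)) :
    subdiff Rf x = prodSet (fun i => dsetC (sgn (x i))) := by
  ext u
  rw [mem_subdiff_R_iff]
  exact forall_congr' (fun i => sd1_iff (x i) (u i))

lemma fenchel_Rf : fenchel (Rf : EuclideanSpace ℝ (Fin N) → EReal) = Ff := by
  classical
  funext u
  unfold fenchel Ff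
  by_cases hu : ∀ i, |u i| ≤ 1
  · rw [if_pos hu]
    apply le_antisymm
    · apply iSup_le
      intro x
      show ((inner ℝ u x : ℝ) : EReal) - ((∑ i, |x i| : ℝ) : EReal) ≤ 0
      rw [inner_eq, ← EReal.coe_sub, ← EReal.coe_zero, EReal.coe_le_coe_iff]
      have hterm : ∀ i, u i * x i ≤ |x i| := by
        intro i
        calc u i * x i ≤ |u i * x i| := le_abs_self _
          _ = |u i| * |x i| := abs_mul _ _
          _ ≤ 1 * |x i| := mul_le_mul_of_nonneg_right (hu i) (abs_nonneg _)
          _ = |x i| := one_mul _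
      have hsum := Finset.sum_le_sum (fun i (_ : i ∈ Finset.univ) => hterm i)
      linarith
    · have h0 := le_iSup (fun x : EuclideanSpace ℝ (Fin N) =>
        ((inner ℝ u x : ℝ) : EReal) - Rf x) 0
      refine le_trans ?_ h0
      have h1 : (inner ℝ u (0 : EuclideanSpace ℝ (Fin N)) : ℝ) = 0 := inner_zero_right u
      have h2 : (∑ i, |(0 : EuclideanSpace ℝ (Fin N)) i|) = (0:ℝ) := by
        apply Finset.sum_eq_zero
        intro i _
        rw [show (0 : EuclideanSpace ℝ (Fin N)) i = 0 from rfl, abs_zero]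
      show (0:EReal) ≤ ((inner ℝ u (0:EuclideanSpace ℝ (Fin N)) : ℝ) : EReal)
          - ((∑ i, |(0 : EuclideanSpace ℝ (Fin N)) i| : ℝ) : EReal)
      rw [h1, h2]
      simp
  · rw [if_neg hu]
    push_neg at hu
    obtain ⟨i, hi⟩ := hu
    rw [EReal.eq_top_iff_forall_lt]
    intro y
    have hden : 0 < |u i| * (|u i| - 1) := by nlinarith [abs_nonneg (u i)]
    set K : ℝ := (|y| + 1) / (|u i| * (|u i| - 1)) with hK
    have hK0 : 0 < K := div_pos (by positivity) hden
    set x : EuclideanSpace ℝ (Fin N) := EuclideanSpace.single i (K * u i) with hx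
    have hx1 : (inner ℝ u x : ℝ) = u i * (K * u i) := by
      rw [inner_eq, Finset.sum_eq_single i]
      · rw [hx, EuclideanSpace.single_apply, if_pos rfl]
      · intro j _ hji
        rw [hx, EuclideanSpace.single_apply, if_neg hji, mul_zero]
      · intro hc; exact absurd (Finset.mem_univ i) hc
    have hx2 : (∑ j, |x j|) = |K * u i| := by
      rw [Finset.sum_eq_single i]
      · rw [hx, EuclideanSpace.single_apply, if_pos rfl]
      · intro j _ hji
        rw [hx, EuclideanSpace.single_apply, if_neg hji, abs_zero]
      · intro hc; exact absurd (Finset.mem_univ i) hc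
    have hval : (inner ℝ u x : ℝ) - ∑ j, |x j| = |y| + 1 := by
      rw [hx1, hx2, abs_mul, abs_of_pos hK0]
      have h3 : u i * (K * u i) = K * (|u i| * |u i|) := by
        rw [abs_mul_abs_self]; ring
      rw [h3, show K * (|u i| * |u i|) - K * |u i| = K * (|u i| * (|u i| - 1)) by ring,
        hK, div_mul_cancel₀ _ (ne_of_gt hden)]
    calc (y : EReal) < ((|y| + 1 : ℝ) : EReal) := by
          rw [EReal.coe_lt_coe_iff]; linarith [le_abs_self y]
      _ = ((inner ℝ u x : ℝ) : EReal) - ((∑ j, |x j| : ℝ) : EReal) := by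
          rw [← EReal.coe_sub, hval]
      _ ≤ ⨆ z : EuclideanSpace ℝ (Fin N),
            (((inner ℝ u z : ℝ) : EReal) - Rf z) :=
          le_iSup (fun z : EuclideanSpace ℝ (Fin N) =>
            ((inner ℝ u z : ℝ) : EReal) - Rf z) x

lemma Ff_zero : Ff (0 : EuclideanSpace ℝ (Fin N)) = 0 := by
  unfold Ff
  rw [if_pos]
  intro i
  rw [show (0 : EuclideanSpace ℝ (Fin N)) i = 0 from rfl, abs_zero]
  norm_num

lemma subdiff_Ff_of_not {u : EuclideanSpace ℝ (Fin N)} (hu : ¬∀ i, |u i| ≤ 1) :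
    subdiff Ff u = ∅ := by
  ext v
  simp only [mem_empty_iff_false, iff_false]
  intro hv
  have h := hv 0
  rw [Ff_zero, show Ff u = ⊤ from if_neg hu, EReal.top_add_coe] at h
  simp at h

lemma mem_subdiff_Ff_iff {u : EuclideanSpace ℝ (Fin N)} (hu : ∀ i, |u i| ≤ 1)
    (v : EuclideanSpace ℝ (Fin N)) :
    v ∈ subdiff Ff u ↔ ∀ i, ∀ s : ℝ, |s| ≤ 1 → v i * (s - u i) ≤ 0 := by
  classical
  have key : v ∈ subdiff Ff u ↔
      ∀ y : EuclideanSpace ℝ (Fin N), (∀ i, |y i| ≤ 1) → ∑ i, v i * (y i - u i) ≤ 0 := by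
    constructor
    · intro h y hy
      have hh := h y
      rw [show Ff u = 0 from if_pos hu, show Ff y = 0 from if_pos hy, zero_add, inner_eq,
        ← EReal.coe_zero, EReal.coe_le_coe_iff] at hh
      exact hh
    · intro h y
      by_cases hy : ∀ i, |y i| ≤ 1
      · rw [show Ff u = 0 from if_pos hu, show Ff y = 0 from if_pos hy, zero_add, inner_eq,
          ← EReal.coe_zero, EReal.coe_le_coe_iff]
        exact h y hy
      · rw [show Ff y = ⊤ from if_neg hy]
        exact le_top
  rw [key]
  constructor
  · intro h i s hs
    have hy := h (upd u i s) (by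
      intro j
      rw [upd_apply]
      rcases eq_or_ne j i with rfl | hji
      · rw [if_pos rfl]; exact hs
      · rw [if_neg hji]; exact hu j)
    rwa [Finset.sum_eq_single i (fun j _ hji => by rw [upd_apply, if_neg hji]; ring)
      (fun hc => absurd (Finset.mem_univ i) hc), upd_apply, if_pos rfl] at hy
  · intro h y hy
    apply Finset.sum_nonpos
    intro i _
    exact h i (y i) (hy i)

lemma nc1_iff (t a : ℝ) (ht : |t| ≤ 1) :
    (∀ s : ℝ, |s| ≤ 1 → a * (s - t) ≤ 0) ↔ a ∈ psetC (dsgn t) := by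
  have htt := abs_le.1 ht
  by_cases h1 : t = -1
  · subst h1
    rw [show dsgn (-1) = .neg from if_pos rfl]
    simp only [psetC, mem_Iic]
    constructor
    · intro h
      have := h 1 (by norm_num)
      norm_num at this
      linarith
    · intro ha s hs
      have hs' := abs_le.1 hs
      have : 0 ≤ s - (-1) := by linarith [hs'.1]
      exact mul_nonpos_of_nonpos_of_nonneg ha this
  · by_cases h2 : t = 1
    · subst h2
      rw [show dsgn 1 = .pos from by norm_num [dsgn]]
      simp only [psetC, mem_Ici]
      constructor
      · intro h
        have := h (-1) (by norm_num)
        norm_num at this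
        linarith
      · intro ha s hs
        have hs' := abs_le.1 hs
        have : s - 1 ≤ 0 := by linarith [hs'.2]
        exact mul_nonpos_of_nonneg_of_nonpos ha this
    · rw [show dsgn t = .zer from by simp [dsgn, h1, h2]]
      simp only [psetC, mem_singleton_iff]
      have htl : -1 < t := lt_of_le_of_ne htt.1 (fun he => h1 he.symm)
      have htr : t < 1 := lt_of_le_of_ne htt.2 h2
      constructor
      · intro h
        have hA := h ((t+1)/2) (by rw [abs_le]; constructor <;> linarith)
        have hB := h ((t-1)/2) (by rw [abs_le]; constructor <;> linarith)
        have e1 : a ≤ 0 := by nlinarith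
        have e2 : 0 ≤ a := by nlinarith
        linarith
      · rintro rfl s _
        rw [zero_mul]

lemma subdiff_Ff_eq {u : EuclideanSpace ℝ (Fin N)} (hu : ∀ i, |u i| ≤ 1) :
    subdiff Ff u = prodSet (fun i => psetC (dsgn (u i))) := by
  ext v
  rw [mem_subdiff_Ff_iff hu]
  exact forall_congr' (fun i => nc1_iff (u i) (v i) (hu i))

def pstrat (ε : Fin N → Sg) : Set (EuclideanSpace ℝ (Fin N)) := prodSet (fun i => pset (ε i))
def dstrat (ε : Fin N → Sg) : Set (EuclideanSpace ℝ (Fin N)) := prodSet (fun i => dset (ε i))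

lemma pstrat_inj {ε δ : Fin N → Sg} (h : pstrat ε = pstrat δ) : ε = δ := by
  funext i
  have h2 := congrFun (prodSet_inj (fun i => pset_nonempty _) (fun i => pset_nonempty _) h) i
  obtain ⟨t, ht⟩ := pset_nonempty (ε i)
  rw [← sgn_eq_of_mem ht, sgn_eq_of_mem (h2 ▸ ht)]

lemma dstrat_inj {ε δ : Fin N → Sg} (h : dstrat ε = dstrat δ) : ε = δ := by
  funext i
  have h2 := congrFun (prodSet_inj (fun i => dset_nonempty _) (fun i => dset_nonempty _) h) i
  obtain ⟨t, ht⟩ := dset_nonempty (ε i)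
  rw [← dsgn_eq_of_mem ht, dsgn_eq_of_mem (h2 ▸ ht)]

lemma closure_pstrat (ε : Fin N → Sg) : closure (pstrat ε) = prodSet (fun i => psetC (ε i)) := by
  unfold pstrat
  rw [closure_prodSet]
  simp only [closure_pset]

lemma closure_dstrat (ε : Fin N → Sg) : closure (dstrat ε) = prodSet (fun i => dsetC (ε i)) := by
  unfold dstrat
  rw [closure_prodSet]
  simp only [closure_dset]

lemma zero_mem_psetC (a : Sg) : (0:ℝ) ∈ psetC a := by
  cases a <;> simp [psetC]

lemma dsetC_nonempty (a : Sg) : (dsetC a).Nonempty := by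
  cases a
  · exact ⟨-1, rfl⟩
  · exact ⟨0, by norm_num [dsetC]⟩
  · exact ⟨1, rfl⟩

lemma dset_subset_Icc (a : Sg) : dset a ⊆ Icc (-1 : ℝ) 1 := by
  cases a
  · intro t ht; rw [mem_singleton_iff.1 ht]; norm_num
  · exact Ioo_subset_Icc_self
  · intro t ht; rw [mem_singleton_iff.1 ht]; norm_num

lemma mem_dset_dsgn {t : ℝ} (ht : t ∈ Icc (-1:ℝ) 1) : t ∈ dset (dsgn t) := by
  unfold dsgn
  by_cases h1 : t = -1
  · rw [if_pos h1, h1]; rfl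
  · by_cases h2 : t = 1
    · rw [if_neg h1, if_pos h2, h2]; rfl
    · rw [if_neg h1, if_neg h2]
      exact ⟨lt_of_le_of_ne ht.1 (fun he => h1 he.symm), lt_of_le_of_ne ht.2 h2⟩

lemma pord (a b : Sg) : pset a ⊆ psetC b ↔ (a = b ∨ a = Sg.zer) := by
  cases a <;> cases b
  · refine iff_of_true ?_ (Or.inl rfl)
    intro z hz
    simp only [pset, mem_Iio] at hz
    simp only [psetC, mem_Iic]
    linarith
  · refine iff_of_false ?_ (by rintro (h | h) <;> exact Sg.noConfusion h)
    intro h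
    have := h (show (-1:ℝ) ∈ pset Sg.neg by norm_num [pset])
    norm_num [psetC] at this
  · refine iff_of_false ?_ (by rintro (h | h) <;> exact Sg.noConfusion h)
    intro h
    have := h (show (-1:ℝ) ∈ pset Sg.neg by norm_num [pset])
    norm_num [psetC] at this
  · refine iff_of_true ?_ (Or.inr rfl)
    intro z hz
    simp only [pset, mem_singleton_iff] at hz
    simp [psetC, hz]
  · exact iff_of_true (fun z hz => hz) (Or.inl rfl)
  · refine iff_of_true ?_ (Or.inr rfl)
    intro z hz
    simp only [pset, mem_singleton_iff] at hz
    simp [psetC, hz]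
  · refine iff_of_false ?_ (by rintro (h | h) <;> exact Sg.noConfusion h)
    intro h
    have := h (show (1:ℝ) ∈ pset Sg.pos by norm_num [pset])
    norm_num [psetC] at this
  · refine iff_of_false ?_ (by rintro (h | h) <;> exact Sg.noConfusion h)
    intro h
    have := h (show (1:ℝ) ∈ pset Sg.pos by norm_num [pset])
    norm_num [psetC] at this
  · refine iff_of_true ?_ (Or.inl rfl)
    intro z hz
    simp only [pset, mem_Ioi] at hz
    simp only [psetC, mem_Ici]
    linarith

lemma dord (a b : Sg) : dset b ⊆ dsetC a ↔ (b = a ∨ a = Sg.zer) := by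
  cases a
  · cases b
    · exact iff_of_true (fun z hz => hz) (Or.inl rfl)
    · refine iff_of_false ?_ (by rintro (h | h) <;> exact Sg.noConfusion h)
      intro h
      have := h (show (0:ℝ) ∈ dset Sg.zer by norm_num [dset])
      norm_num [dsetC] at this
    · refine iff_of_false ?_ (by rintro (h | h) <;> exact Sg.noConfusion h)
      intro h
      have := h (show (1:ℝ) ∈ dset Sg.pos from rfl)
      norm_num [dsetC] at this
  · exact iff_of_true (fun z hz => dset_subset_Icc b hz) (Or.inr rfl)
  · cases b
    · refine iff_of_false ?_ (by rintro (h | h) <;> exact Sg.noConfusion h)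
      intro h
      have := h (show (-1:ℝ) ∈ dset Sg.neg from rfl)
      norm_num [dsetC] at this
    · refine iff_of_false ?_ (by rintro (h | h) <;> exact Sg.noConfusion h)
      intro h
      have := h (show (0:ℝ) ∈ dset Sg.zer by norm_num [dset])
      norm_num [dsetC] at this
    · exact iff_of_true (fun z hz => hz) (Or.inl rfl)

lemma pset_frontier (a b : Sg) (h : (pset a ∩ psetC b).Nonempty) : pset a ⊆ psetC b := by
  rw [pord]
  obtain ⟨t, ht1, ht2⟩ := h
  cases a <;> cases b
  · exact Or.inl rfl
  · exfalso
    simp only [pset, mem_Iio] at ht1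
    simp only [psetC, mem_singleton_iff] at ht2
    linarith [ht2 ▸ ht1]
  · exfalso
    simp only [pset, mem_Iio] at ht1
    simp only [psetC, mem_Ici] at ht2
    linarith
  · exact Or.inr rfl
  · exact Or.inl rfl
  · exact Or.inr rfl
  · exfalso
    simp only [pset, mem_Ioi] at ht1
    simp only [psetC, mem_Iic] at ht2
    linarith
  · exfalso
    simp only [pset, mem_Ioi] at ht1
    simp only [psetC, mem_singleton_iff] at ht2
    linarith [ht2 ▸ ht1]
  · exact Or.inl rfl

lemma dset_frontier (a b : Sg) (h : (dset b ∩ dsetC a).Nonempty) : dset b ⊆ dsetC a := by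
  rw [dord]
  obtain ⟨t, ht1, ht2⟩ := h
  cases a
  · cases b
    · exact Or.inl rfl
    · exfalso
      simp only [dset, mem_Ioo] at ht1
      simp only [dsetC, mem_singleton_iff] at ht2
      linarith [ht2 ▸ ht1.1]
    · exfalso
      simp only [dset, mem_singleton_iff] at ht1
      simp only [dsetC, mem_singleton_iff] at ht2
      rw [ht1] at ht2
      norm_num at ht2
  · exact Or.inr rfl
  · cases b
    · exfalso
      simp only [dset, mem_singleton_iff] at ht1
      simp only [dsetC, mem_singleton_iff] at ht2
      rw [ht1] at ht2
      norm_num at ht2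
    · exfalso
      simp only [dset, mem_Ioo] at ht1
      simp only [dsetC, mem_singleton_iff] at ht2
      linarith [ht2 ▸ ht1.2]
    · exact Or.inl rfl

lemma mem_primal_strat_iff (M : Set (EuclideanSpace ℝ (Fin N))) :
    M ∈ coordProdStrat {Set.Iio 0, {0}, Set.Ioi 0} N ↔ ∃ ε : Fin N → Sg, M = pstrat ε := by
  constructor
  · rintro ⟨s, hs, rfl⟩
    classical
    refine ⟨fun i => if s i = Set.Iio 0 then Sg.neg else if s i = {0} then Sg.zer else Sg.pos, ?_⟩
    have hsi : ∀ i, s i = pset (if s i = Set.Iio 0 then Sg.neg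
        else if s i = {0} then Sg.zer else Sg.pos) := by
      intro i
      have hmem := hs i
      simp only [Set.mem_insert_iff, Set.mem_singleton_iff] at hmem
      rcases hmem with h | h | h
      · rw [if_pos h, h]; rfl
      · have hne : s i ≠ Set.Iio 0 := by
          rw [h]; intro he
          have h0 : (0:ℝ) ∈ ({0} : Set ℝ) := rfl
          rw [he] at h0
          exact lt_irrefl 0 (mem_Iio.1 h0)
        rw [if_neg hne, if_pos h, h]; rfl
      · have hne : s i ≠ Set.Iio 0 := by
          rw [h]; intro he
          have h0 : (1:ℝ) ∈ Set.Ioi (0:ℝ) := by norm_num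
          rw [he] at h0
          simp only [mem_Iio] at h0
          linarith
        have hne2 : s i ≠ ({0} : Set ℝ) := by
          rw [h]; intro he
          have h0 : (1:ℝ) ∈ Set.Ioi (0:ℝ) := by norm_num
          rw [he] at h0
          simp only [mem_singleton_iff] at h0
          linarith
        rw [if_neg hne, if_neg hne2, h]; rfl
    ext x
    exact forall_congr' (fun i => by rw [hsi i])
  · rintro ⟨ε, rfl⟩
    refine ⟨fun i => pset (ε i), fun i => ?_, rfl⟩
    cases h : ε i <;> simp [pset, h]

lemma mem_dual_strat_iff (M : Set (EuclideanSpace ℝ (Fin N))) :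
    M ∈ coordProdStrat {{-1}, Set.Ioo (-1) 1, {1}} N ↔ ∃ ε : Fin N → Sg, M = dstrat ε := by
  constructor
  · rintro ⟨s, hs, rfl⟩
    classical
    refine ⟨fun i => if s i = ({-1} : Set ℝ) then Sg.neg
      else if s i = Set.Ioo (-1) 1 then Sg.zer else Sg.pos, ?_⟩
    have hsi : ∀ i, s i = dset (if s i = ({-1} : Set ℝ) then Sg.neg
        else if s i = Set.Ioo (-1) 1 then Sg.zer else Sg.pos) := by
      intro i
      have hmem := hs i
      simp only [Set.mem_insert_iff, Set.mem_singleton_iff] at hmem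
      rcases hmem with h | h | h
      · rw [if_pos h, h]; rfl
      · have hne : s i ≠ ({-1} : Set ℝ) := by
          rw [h]; intro he
          have h0 : (-1:ℝ) ∈ ({-1} : Set ℝ) := rfl
          rw [← he] at h0
          simp only [mem_Ioo] at h0
          linarith [h0.1]
        rw [if_neg hne, if_pos h, h]; rfl
      · have hne : s i ≠ ({-1} : Set ℝ) := by
          rw [h]; intro he
          have h0 : (1:ℝ) ∈ ({1} : Set ℝ) := rfl
          rw [he] at h0
          simp only [mem_singleton_iff] at h0
          norm_num at h0
        have hne2 : s i ≠ Set.Ioo (-1 : ℝ) 1 := by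
          rw [h]; intro he
          have h0 : (1:ℝ) ∈ ({1} : Set ℝ) := rfl
          rw [he] at h0
          simp only [mem_Ioo] at h0
          linarith [h0.2]
        rw [if_neg hne, if_neg hne2, h]; rfl
    ext x
    exact forall_congr' (fun i => by rw [hsi i])
  · rintro ⟨ε, rfl⟩
    refine ⟨fun i => dset (ε i), fun i => ?_, rfl⟩
    cases h : ε i <;> simp [dset, h]

lemma domSubdiff_R : domSubdiff (Rf : EuclideanSpace ℝ (Fin N) → EReal) = univ := by
  ext x
  simp only [domSubdiff, mem_setOf_eq, mem_univ, iff_true]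
  rw [subdiff_R_eq]
  exact prodSet_nonempty (fun i => by
    cases h : sgn (x i)
    · exact ⟨-1, rfl⟩
    · exact ⟨0, by norm_num [dsetC]⟩
    · exact ⟨1, rfl⟩)

lemma domSubdiff_F : domSubdiff (Ff : EuclideanSpace ℝ (Fin N) → EReal)
    = prodSet (fun _ => Icc (-1:ℝ) 1) := by
  ext u
  simp only [domSubdiff, mem_setOf_eq]
  constructor
  · rintro ⟨v, hv⟩
    by_cases hu : ∀ i, |u i| ≤ 1
    · exact fun i => abs_le.1 (hu i)
    · rw [subdiff_Ff_of_not hu] at hv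
      exact absurd hv (notMem_empty v)
  · intro hu
    have hu' : ∀ i, |u i| ≤ 1 := fun i => abs_le.2 (hu i)
    rw [subdiff_Ff_eq hu']
    exact prodSet_nonempty (fun i => ⟨0, zero_mem_psetC _⟩)

lemma corrOp_R_pstrat (ε : Fin N → Sg) : corrOp Rf (pstrat ε) = dstrat ε := by
  unfold corrOp dstrat
  ext u
  simp only [mem_iUnion, exists_prop]
  constructor
  · rintro ⟨x, hx, hu⟩
    rw [subdiff_R_eq,
      show (fun i => dsetC (sgn (x i))) = fun i => dsetC (ε i) from
        funext fun i => by rw [sgn_eq_of_mem (hx i)], ii_dual] at hu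
    exact hu
  · intro hu
    obtain ⟨x, hx⟩ := prodSet_nonempty (fun i => pset_nonempty (ε i))
    refine ⟨x, hx, ?_⟩
    rw [subdiff_R_eq,
      show (fun i => dsetC (sgn (x i))) = fun i => dsetC (ε i) from
        funext fun i => by rw [sgn_eq_of_mem (hx i)], ii_dual]
    exact hu

lemma corrOp_F_dstrat (ε : Fin N → Sg) : corrOp Ff (dstrat ε) = pstrat ε := by
  unfold corrOp pstrat
  ext v
  simp only [mem_iUnion, exists_prop]
  constructor
  · rintro ⟨u, hu, hv⟩
    have hu' : ∀ i, |u i| ≤ 1 := fun i => abs_le.2 (dset_subset_Icc (ε i) (hu i))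
    rw [subdiff_Ff_eq hu',
      show (fun i => psetC (dsgn (u i))) = fun i => psetC (ε i) from
        funext fun i => by rw [dsgn_eq_of_mem (hu i)], ii_primal] at hv
    exact hv
  · intro hv
    obtain ⟨u, hu⟩ := prodSet_nonempty (fun i => dset_nonempty (ε i))
    have hu' : ∀ i, |u i| ≤ 1 := fun i => abs_le.2 (dset_subset_Icc (ε i) (hu i))
    refine ⟨u, hu, ?_⟩
    rw [subdiff_Ff_eq hu',
      show (fun i => psetC (dsgn (u i))) = fun i => psetC (ε i) from
        funext fun i => by rw [dsgn_eq_of_mem (hu i)], ii_primal]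
    exact hv

lemma primal_strat : IsStratification (domSubdiff (Rf : EuclideanSpace ℝ (Fin N) → EReal))
    (coordProdStrat {Set.Iio 0, {0}, Set.Ioi 0} N) := by
  constructor
  · apply Set.Finite.subset (Set.finite_range (fun ε : Fin N → Sg => pstrat ε))
    intro M hM
    obtain ⟨ε, rfl⟩ := (mem_primal_strat_iff M).1 hM
    exact mem_range_self ε
  · intro M hM
    obtain ⟨ε, rfl⟩ := (mem_primal_strat_iff M).1 hM
    exact prodSet_nonempty (fun i => pset_nonempty _)
  · rw [domSubdiff_R]
    ext x
    simp only [mem_sUnion, mem_univ, iff_true]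
    exact ⟨pstrat (fun i => sgn (x i)), (mem_primal_strat_iff _).2 ⟨_, rfl⟩,
      fun i => mem_pset_sgn (x i)⟩
  · intro M hM M' hM' hne
    obtain ⟨ε, rfl⟩ := (mem_primal_strat_iff M).1 hM
    obtain ⟨δ, rfl⟩ := (mem_primal_strat_iff M').1 hM'
    rw [Set.disjoint_left]
    intro x hx hx'
    apply hne
    have hεδ : ε = δ := funext fun i => by
      rw [← sgn_eq_of_mem (hx i), sgn_eq_of_mem (hx' i)]
    rw [hεδ]
  · intro M hM M' hM' hne
    obtain ⟨ε, rfl⟩ := (mem_primal_strat_iff M).1 hM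
    obtain ⟨δ, rfl⟩ := (mem_primal_strat_iff M').1 hM'
    rw [closure_pstrat] at hne ⊢
    obtain ⟨x, hx1, hx2⟩ := hne
    intro y hy i
    exact pset_frontier (ε i) (δ i) ⟨x i, hx1 i, hx2 i⟩ (hy i)

lemma dual_strat : IsStratification (domSubdiff (Ff : EuclideanSpace ℝ (Fin N) → EReal))
    (coordProdStrat {{-1}, Set.Ioo (-1) 1, {1}} N) := by
  constructor
  · apply Set.Finite.subset (Set.finite_range (fun ε : Fin N → Sg => dstrat ε))
    intro M hM
    obtain ⟨ε, rfl⟩ := (mem_dual_strat_iff M).1 hM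
    exact mem_range_self ε
  · intro M hM
    obtain ⟨ε, rfl⟩ := (mem_dual_strat_iff M).1 hM
    exact prodSet_nonempty (fun i => dset_nonempty _)
  · rw [domSubdiff_F]
    ext u
    simp only [mem_sUnion]
    constructor
    · rintro ⟨M, hM, huM⟩
      obtain ⟨ε, rfl⟩ := (mem_dual_strat_iff M).1 hM
      exact fun i => dset_subset_Icc (ε i) (huM i)
    · intro hu
      exact ⟨dstrat (fun i => dsgn (u i)), (mem_dual_strat_iff _).2 ⟨_, rfl⟩,
        fun i => mem_dset_dsgn (hu i)⟩
  · intro M hM M' hM' hne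
    obtain ⟨ε, rfl⟩ := (mem_dual_strat_iff M).1 hM
    obtain ⟨δ, rfl⟩ := (mem_dual_strat_iff M').1 hM'
    rw [Set.disjoint_left]
    intro u hu hu'
    apply hne
    have hεδ : ε = δ := funext fun i => by
      rw [← dsgn_eq_of_mem (hu i), dsgn_eq_of_mem (hu' i)]
    rw [hεδ]
  · intro M hM M' hM' hne
    obtain ⟨ε, rfl⟩ := (mem_dual_strat_iff M).1 hM
    obtain ⟨δ, rfl⟩ := (mem_dual_strat_iff M').1 hM'
    rw [closure_dstrat] at hne ⊢
    obtain ⟨u, hu1, hu2⟩ := hne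
    intro v hv i
    exact dset_frontier (δ i) (ε i) ⟨u i, hu1 i, hu2 i⟩ (hv i)

lemma the_main : IsMirrorStratifiable (Rf : EuclideanSpace ℝ (Fin N) → EReal)
    (coordProdStrat {Set.Iio 0, {0}, Set.Ioi 0} N)
    (coordProdStrat {{-1}, Set.Ioo (-1) 1, {1}} N) := by
  constructor
  · exact primal_strat
  · rw [fenchel_Rf]; exact dual_strat
  · intro M hM
    obtain ⟨ε, rfl⟩ := (mem_primal_strat_iff M).1 hM
    rw [corrOp_R_pstrat]
    exact (mem_dual_strat_iff _).2 ⟨ε, rfl⟩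
  · intro Md hMd
    obtain ⟨ε, rfl⟩ := (mem_dual_strat_iff Md).1 hMd
    rw [fenchel_Rf, corrOp_F_dstrat]
    exact (mem_primal_strat_iff _).2 ⟨ε, rfl⟩
  · intro M hM Md hMd
    obtain ⟨ε, rfl⟩ := (mem_primal_strat_iff M).1 hM
    obtain ⟨δ, rfl⟩ := (mem_dual_strat_iff Md).1 hMd
    rw [corrOp_R_pstrat, fenchel_Rf, corrOp_F_dstrat]
    constructor
    · intro h; rw [dstrat_inj h]
    · intro h; rw [pstrat_inj h]
  · intro M hM M' hM'
    obtain ⟨ε, rfl⟩ := (mem_primal_strat_iff M).1 hM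
    obtain ⟨δ, rfl⟩ := (mem_primal_strat_iff M').1 hM'
    rw [corrOp_R_pstrat, corrOp_R_pstrat]
    have h1 : stratLE (pstrat ε) (pstrat δ) ↔ ∀ i, (ε i = δ i ∨ ε i = Sg.zer) := by
      unfold stratLE
      rw [closure_pstrat]
      rw [show pstrat ε = prodSet (fun i => pset (ε i)) from rfl,
        prodSet_subset_iff (fun i => pset_nonempty _)]
      exact forall_congr' (fun i => pord _ _)
    have h2 : stratLE (dstrat δ) (dstrat ε) ↔ ∀ i, (δ i = ε i ∨ ε i = Sg.zer) := by
      unfold stratLE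
      rw [closure_dstrat]
      rw [show dstrat δ = prodSet (fun i => dset (δ i)) from rfl,
        prodSet_subset_iff (fun i => dset_nonempty _)]
      exact forall_congr' (fun i => dord _ _)
    rw [h1, h2]
    refine forall_congr' (fun i => ?_)
    constructor
    · rintro (h | h)
      · exact Or.inl h.symm
      · exact Or.inr h
    · rintro (h | h)
      · exact Or.inl h.symm
      · exact Or.inr h

end L1MS

/-- Lemma 2.6: the `ℓ¹` norm, whose Fenchel conjugate is the indicator
of the cube `[-1,1]^N`, is mirror-stratifiable w.r.t. the stratification
`{(-∞,0),{0},(0,∞)}^N` of `ℝ^N` and `{{-1},(-1,1),{1}}^N` of `[-1,1]^N`. -/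
theorem l1_mirror_stratifiable (N : ℕ) :
    let R : EuclideanSpace ℝ (Fin N) → EReal := fun x => ((∑ i, |x i| : ℝ) : EReal)
    (fenchel R = fun u => if ∀ i, |u i| ≤ 1 then (0 : EReal) else ⊤) ∧
    IsMirrorStratifiable R
      (coordProdStrat {Set.Iio 0, {0}, Set.Ioi 0} N)
      (coordProdStrat {{-1}, Set.Ioo (-1) 1, {1}} N) := by
  exact ⟨L1MS.fenchel_Rf, L1MS.the_main⟩

end
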